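/- Let $\{u_i\}_{i=0}^{n}$ be a sequence of closed bounded intervals with $u_0 = [0,0]$, such that both endpoint sequences $\underline{u_i}$ and $\overline{u_i}$ are non-decreasing and the length $\mathrm{len}(u_i)$ is non-decreasing. Let $\lambda_1, \lambda_2 \geq 1$ be natural numbers. Then (forward/delta version) $\sum_{i=0}^{n-1} \|u_i^{\lambda_1}(\Delta u_i)^{\lambda_2}\| \leq \frac{\lambda_2 (n+1)^{\lambda_1}}{\lambda_1 + \lambda_2} \sum_{i=0}^{n-1} \|\Delta u_i\|^{\lambda_1 + \lambda_2}$, where $\Delta u_i = u_{i+1} \ominus_g u_i$. -/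

import Mathlib

/-- gH-difference of intervals given by endpoint pairs. -/
def gH (u v : ℝ × ℝ) : ℝ × ℝ :=
  (min (u.1 - v.1) (u.2 - v.2), max (u.1 - v.1) (u.2 - v.2))

/-- Interval multiplication. -/
def imul (u v : ℝ × ℝ) : ℝ × ℝ :=
  (min (min (u.1 * v.1) (u.1 * v.2)) (min (u.2 * v.1) (u.2 * v.2)),
   max (max (u.1 * v.1) (u.1 * v.2)) (max (u.2 * v.1) (u.2 * v.2)))

/-- Power of an interval, as the image interval `{t^k : t ∈ u}`. -/
noncomputable def ipowI (u : ℝ × ℝ) (k : ℕ) : ℝ × ℝ :=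
  (sInf ((fun t : ℝ => t ^ k) '' Set.Icc u.1 u.2),
   sSup ((fun t : ℝ => t ^ k) '' Set.Icc u.1 u.2))

/-- Quasi-norm of an interval. -/
def inorm (u : ℝ × ℝ) : ℝ := max |u.1| |u.2|

-- Young: (p+q) x^p y^q ≤ p x^(p+q) + q y^(p+q)
lemma young_pq (p q : ℕ) (hp : 1 ≤ p) (hq : 1 ≤ q) {x y : ℝ} (hx : 0 ≤ x) (hy : 0 ≤ y) :
    ((p : ℝ) + q) * (x ^ p * y ^ q) ≤ (p : ℝ) * x ^ (p + q) + (q : ℝ) * y ^ (p + q) := by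
  have hpq : (0:ℝ) < (p:ℝ) + q := by positivity
  have hw1 : (0:ℝ) ≤ (p:ℝ) / ((p:ℝ)+q) := by positivity
  have hw2 : (0:ℝ) ≤ (q:ℝ) / ((p:ℝ)+q) := by positivity
  have hw : (p:ℝ)/((p:ℝ)+q) + (q:ℝ)/((p:ℝ)+q) = 1 := by field_simp
  have key := Real.geom_mean_le_arith_mean2_weighted hw1 hw2
    (pow_nonneg hx (p+q)) (pow_nonneg hy (p+q)) hw
  have e1 : (x ^ (p+q)) ^ ((p:ℝ)/((p:ℝ)+q)) = x ^ p := by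
    rw [← Real.rpow_natCast x (p+q), ← Real.rpow_mul hx]
    rw [show ((p+q : ℕ) : ℝ) * ((p:ℝ)/((p:ℝ)+q)) = (p:ℝ) by push_cast; field_simp]
    exact Real.rpow_natCast x p
  have e2 : (y ^ (p+q)) ^ ((q:ℝ)/((p:ℝ)+q)) = y ^ q := by
    rw [← Real.rpow_natCast y (p+q), ← Real.rpow_mul hy]
    rw [show ((p+q : ℕ) : ℝ) * ((q:ℝ)/((p:ℝ)+q)) = (q:ℝ) by push_cast; field_simp]
    exact Real.rpow_natCast y q
  rw [e1, e2] at key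
  have := mul_le_mul_of_nonneg_left key hpq.le
  calc ((p:ℝ)+q) * (x^p * y^q) ≤ ((p:ℝ)+q) * ((p:ℝ)/((p:ℝ)+q) * x^(p+q) + (q:ℝ)/((p:ℝ)+q) * y^(p+q)) := this
    _ = (p:ℝ) * x^(p+q) + (q:ℝ) * y^(p+q) := by field_simp


lemma bern_aux (m : ℕ) {x : ℝ} (hx : 0 ≤ x) :
    ((m:ℝ)+1) * x ^ m ≤ (x+1) ^ (m+1) - x ^ (m+1) := by
  induction m with
  | zero => simp
  | succ k ih =>
    have h1 : (x+1) * (((k:ℝ)+1) * x^k) ≤ (x+1) * ((x+1)^(k+1) - x^(k+1)) :=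
      mul_le_mul_of_nonneg_left ih (by linarith)
    have e1 : (x+1)^(k+1+1) = (x+1)^(k+1) * (x+1) := pow_succ _ _
    have e2 : x^(k+1+1) = x^(k+1) * x := pow_succ _ _
    have e3 : x^(k+1) = x^k * x := pow_succ _ _
    push_cast
    nlinarith [pow_nonneg hx k, pow_nonneg hx (k+1)]

lemma telescope_Ico (p a b : ℕ) (hab : a ≤ b) :
    ∑ i ∈ Finset.Ico a b, (((i:ℝ)+1) ^ p - (i:ℝ) ^ p) = (b:ℝ) ^ p - (a:ℝ) ^ p := by
  rw [Finset.sum_Ico_eq_sub _ hab]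
  have h : ∀ c : ℕ, ∑ i ∈ Finset.range c, (((i:ℝ)+1) ^ p - (i:ℝ) ^ p)
      = (c:ℝ) ^ p - ((0:ℕ):ℝ) ^ p := by
    intro c
    have := Finset.sum_range_sub (fun i : ℕ => ((i:ℝ)) ^ p) c
    simpa [Nat.cast_succ] using this
  rw [h b, h a]
  ring

lemma scalar_opial (n p q : ℕ) (hp : 1 ≤ p) (hq : 1 ≤ q) (d : ℕ → ℝ)
    (hd : ∀ i < n, 0 ≤ d i) :
    ((p:ℝ) + q) * ∑ i ∈ Finset.range n, (∑ j ∈ Finset.range i, d j) ^ p * d i ^ q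
      ≤ ((q:ℝ) * ((n:ℝ)+1) ^ p) * ∑ i ∈ Finset.range n, d i ^ (p + q) := by
  obtain ⟨m, rfl⟩ : ∃ m, p = m + 1 := ⟨p - 1, by omega⟩
  set e : ℕ → ℝ := fun j => d j ^ (m + 1 + q) with he
  -- Step 1: pointwise bound
  have step1 : ∀ i < n,
      (((m:ℝ)+1) + q) * ((∑ j ∈ Finset.range i, d j) ^ (m+1) * d i ^ q)
        ≤ ((m:ℝ)+1) * (i:ℝ) ^ m * (∑ j ∈ Finset.range i, e j)
          + (q:ℝ) * (i:ℝ) ^ (m+1) * e i := by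
    intro i hi
    rcases Nat.eq_zero_or_pos i with rfl | hipos
    · simp
    have hb0 : (0:ℝ) ≤ ∑ j ∈ Finset.range i, d j :=
      Finset.sum_nonneg fun j hj => hd j (lt_trans (Finset.mem_range.mp hj) hi)
    have hipr : (0:ℝ) < (i:ℝ) ^ q := by positivity
    rw [← mul_le_mul_iff_of_pos_right hipr]
    have young := young_pq (m+1) q (by omega) hq hb0
      (mul_nonneg (Nat.cast_nonneg i) (hd i hi))
    -- power mean : b^(m+1+q) ≤ i^(m+q) * A
    have hpm : (∑ j ∈ Finset.range i, d j) ^ (m + 1 + q)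
        ≤ (i:ℝ) ^ (m + q) * ∑ j ∈ Finset.range i, e j := by
      have := pow_sum_le_card_mul_sum_pow
        (s := Finset.range i) (f := d)
        (fun j hj => hd j (lt_trans (Finset.mem_range.mp hj) hi)) (m + q)
      simpa [he, Finset.card_range, show m + q + 1 = m + 1 + q by omega] using this
    calc (((m:ℝ)+1) + q) * ((∑ j ∈ Finset.range i, d j) ^ (m+1) * d i ^ q) * (i:ℝ) ^ q
        = (((m+1:ℕ):ℝ) + q) * ((∑ j ∈ Finset.range i, d j) ^ (m+1) * ((i:ℝ) * d i) ^ q) := by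
          push_cast; ring
      _ ≤ ((m+1:ℕ):ℝ) * (∑ j ∈ Finset.range i, d j) ^ (m+1+q)
            + (q:ℝ) * ((i:ℝ) * d i) ^ (m+1+q) := young
      _ ≤ ((m+1:ℕ):ℝ) * ((i:ℝ) ^ (m+q) * ∑ j ∈ Finset.range i, e j)
            + (q:ℝ) * ((i:ℝ) * d i) ^ (m+1+q) := by
          gcongr
      _ = (((m:ℝ)+1) * (i:ℝ) ^ m * (∑ j ∈ Finset.range i, e j)
            + (q:ℝ) * (i:ℝ) ^ (m+1) * e i) * (i:ℝ) ^ q := by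
          push_cast [he]; ring
  -- Sum step 1 over i
  have step2 : (((m:ℝ)+1) + q) * ∑ i ∈ Finset.range n,
        (∑ j ∈ Finset.range i, d j) ^ (m+1) * d i ^ q
      ≤ ((m:ℝ)+1) * ∑ i ∈ Finset.range n, (i:ℝ) ^ m * (∑ j ∈ Finset.range i, e j)
        + (q:ℝ) * ∑ i ∈ Finset.range n, (i:ℝ) ^ (m+1) * e i := by
    rw [Finset.mul_sum, Finset.mul_sum, Finset.mul_sum, ← Finset.sum_add_distrib]
    refine Finset.sum_le_sum fun i hi => ?_
    have := step1 i (Finset.mem_range.mp hi)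
    calc (((m:ℝ)+1) + q) * ((∑ j ∈ Finset.range i, d j) ^ (m+1) * d i ^ q)
        ≤ ((m:ℝ)+1) * (i:ℝ) ^ m * (∑ j ∈ Finset.range i, e j)
          + (q:ℝ) * (i:ℝ) ^ (m+1) * e i := this
      _ = ((m:ℝ)+1) * ((i:ℝ) ^ m * ∑ j ∈ Finset.range i, e j)
          + (q:ℝ) * ((i:ℝ) ^ (m+1) * e i) := by ring
  -- Swap the double sum
  have swap : ∑ i ∈ Finset.range n, (i:ℝ) ^ m * (∑ j ∈ Finset.range i, e j)
      = ∑ j ∈ Finset.range n, (∑ i ∈ Finset.Ico (j+1) n, (i:ℝ) ^ m) * e j := by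
    have h := Finset.sum_Ico_Ico_comm' 0 n (fun a c => ((c:ℝ)) ^ m * e a)
    simp only [← Finset.range_eq_Ico] at h
    calc ∑ i ∈ Finset.range n, (i:ℝ) ^ m * ∑ j ∈ Finset.range i, e j
        = ∑ i ∈ Finset.range n, ∑ j ∈ Finset.range i, (i:ℝ) ^ m * e j := by
          simp_rw [Finset.mul_sum]
      _ = ∑ j ∈ Finset.range n, ∑ i ∈ Finset.Ico (j+1) n, (i:ℝ) ^ m * e j := h.symm
      _ = ∑ j ∈ Finset.range n, (∑ i ∈ Finset.Ico (j+1) n, (i:ℝ) ^ m) * e j := by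
          simp_rw [Finset.sum_mul]
  -- per-j bound on coefficients
  have perj : ∀ j < n, ((m:ℝ)+1) * (∑ i ∈ Finset.Ico (j+1) n, (i:ℝ) ^ m)
      + (q:ℝ) * (j:ℝ) ^ (m+1) ≤ (q:ℝ) * ((n:ℝ)+1) ^ (m+1) := by
    intro j hj
    have h1 : ((m:ℝ)+1) * (∑ i ∈ Finset.Ico (j+1) n, (i:ℝ) ^ m)
        ≤ (n:ℝ) ^ (m+1) - (((j:ℝ)+1)) ^ (m+1) := by
      rw [Finset.mul_sum]
      calc ∑ i ∈ Finset.Ico (j+1) n, ((m:ℝ)+1) * (i:ℝ) ^ m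
          ≤ ∑ i ∈ Finset.Ico (j+1) n, (((i:ℝ)+1) ^ (m+1) - (i:ℝ) ^ (m+1)) :=
            Finset.sum_le_sum fun i _ => bern_aux m (Nat.cast_nonneg i)
        _ = (n:ℝ) ^ (m+1) - ((j+1:ℕ):ℝ) ^ (m+1) := telescope_Ico (m+1) (j+1) n hj
        _ = (n:ℝ) ^ (m+1) - (((j:ℝ)+1)) ^ (m+1) := by push_cast; ring
    have hjn : (j:ℝ) ^ (m+1) ≤ (n:ℝ) ^ (m+1) :=
      pow_le_pow_left₀ (Nat.cast_nonneg j) (by exact_mod_cast hj.le) _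
    have hjj : (j:ℝ) ^ (m+1) ≤ ((j:ℝ)+1) ^ (m+1) :=
      pow_le_pow_left₀ (Nat.cast_nonneg j) (by linarith) _
    have hnn : (n:ℝ) ^ (m+1) ≤ ((n:ℝ)+1) ^ (m+1) :=
      pow_le_pow_left₀ (Nat.cast_nonneg n) (by linarith) _
    have hq1 : (1:ℝ) ≤ (q:ℝ) := by exact_mod_cast hq
    nlinarith [mul_nonneg (sub_nonneg.2 hq1) (sub_nonneg.2 hjn)]
  -- combine
  have he_nonneg : ∀ j < n, 0 ≤ e j := fun j hj => by
    simpa [he] using pow_nonneg (hd j hj) (m+1+q)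
  calc (((m+1:ℕ):ℝ) + q) * ∑ i ∈ Finset.range n,
        (∑ j ∈ Finset.range i, d j) ^ (m+1) * d i ^ q
      = (((m:ℝ)+1) + q) * ∑ i ∈ Finset.range n,
        (∑ j ∈ Finset.range i, d j) ^ (m+1) * d i ^ q := by push_cast; ring
    _ ≤ ((m:ℝ)+1) * ∑ i ∈ Finset.range n, (i:ℝ) ^ m * (∑ j ∈ Finset.range i, e j)
        + (q:ℝ) * ∑ i ∈ Finset.range n, (i:ℝ) ^ (m+1) * e i := step2
    _ = ∑ j ∈ Finset.range n, (((m:ℝ)+1) * (∑ i ∈ Finset.Ico (j+1) n, (i:ℝ) ^ m)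
          + (q:ℝ) * (j:ℝ) ^ (m+1)) * e j := by
        rw [swap, Finset.mul_sum, Finset.mul_sum, ← Finset.sum_add_distrib]
        exact Finset.sum_congr rfl fun j _ => by ring
    _ ≤ ∑ j ∈ Finset.range n, ((q:ℝ) * ((n:ℝ)+1) ^ (m+1)) * e j := by
        refine Finset.sum_le_sum fun j hj => ?_
        exact mul_le_mul_of_nonneg_right (perj j (Finset.mem_range.mp hj))
          (he_nonneg j (Finset.mem_range.mp hj))
    _ = ((q:ℝ) * ((n:ℝ)+1) ^ ((m+1:ℕ))) * ∑ i ∈ Finset.range n, d i ^ (m+1+q) := by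
        rw [← Finset.mul_sum]

lemma ipowI_eq {a b : ℝ} (ha : 0 ≤ a) (hab : a ≤ b) (k : ℕ) :
    ipowI (a, b) k = (a ^ k, b ^ k) := by
  have h1 : IsLeast ((fun t : ℝ => t ^ k) '' Set.Icc a b) (a ^ k) := by
    refine ⟨⟨a, ⟨le_refl a, hab⟩, rfl⟩, ?_⟩
    rintro y ⟨t, ⟨hta, _⟩, rfl⟩
    exact pow_le_pow_left₀ ha hta k
  have h2 : IsGreatest ((fun t : ℝ => t ^ k) '' Set.Icc a b) (b ^ k) := by
    refine ⟨⟨b, ⟨hab, le_refl b⟩, rfl⟩, ?_⟩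
    rintro y ⟨t, ⟨hta, htb⟩, rfl⟩
    exact pow_le_pow_left₀ (ha.trans hta) htb k
  unfold ipowI
  simp only [Prod.mk.injEq]
  exact ⟨h1.csInf_eq, h2.csSup_eq⟩

lemma imul_eq {a b c d : ℝ} (ha : 0 ≤ a) (hab : a ≤ b) (hc : 0 ≤ c) (hcd : c ≤ d) :
    imul (a, b) (c, d) = (a * c, b * d) := by
  have hb : 0 ≤ b := ha.trans hab
  have hd' : 0 ≤ d := hc.trans hcd
  have h1 : a * c ≤ a * d := mul_le_mul_of_nonneg_left hcd ha
  have h2 : b * c ≤ b * d := mul_le_mul_of_nonneg_left hcd hb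
  have h3 : a * c ≤ b * c := mul_le_mul_of_nonneg_right hab hc
  have h4 : a * d ≤ b * d := mul_le_mul_of_nonneg_right hab hd'
  unfold imul
  simp only [Prod.mk.injEq]
  constructor
  · rw [min_eq_left h1, min_eq_left h2, min_eq_left h3]
  · rw [max_eq_right h1, max_eq_right h2, max_eq_right h4]

lemma inorm_eq {x y : ℝ} (hx : 0 ≤ x) (hxy : x ≤ y) : inorm (x, y) = y := by
  unfold inorm
  rw [abs_of_nonneg hx, abs_of_nonneg (hx.trans hxy), max_eq_right hxy]

lemma gH_eq {a b c d : ℝ} (h : a - c ≤ b - d) : gH (a, b) (c, d) = (a - c, b - d) := by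
  unfold gH
  simp only [Prod.mk.injEq]
  exact ⟨min_eq_left h, max_eq_right h⟩

theorem interval_opial_forward
    (n : ℕ) (lo hi : ℕ → ℝ) (l1 l2 : ℕ)
    (hl1 : 1 ≤ l1) (hl2 : 1 ≤ l2)
    (hvalid : ∀ i ≤ n, lo i ≤ hi i)
    (h0lo : lo 0 = 0) (h0hi : hi 0 = 0)
    (hlo : ∀ i < n, lo i ≤ lo (i + 1))
    (hhi : ∀ i < n, hi i ≤ hi (i + 1))
    (hlen : ∀ i < n, hi i - lo i ≤ hi (i + 1) - lo (i + 1)) :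
    ∑ i ∈ Finset.range n,
        inorm (imul (ipowI (lo i, hi i) l1)
                    (ipowI (gH (lo (i + 1), hi (i + 1)) (lo i, hi i)) l2))
      ≤ ((l2 : ℝ) * ((n : ℝ) + 1) ^ l1) / ((l1 : ℝ) + (l2 : ℝ)) *
        ∑ i ∈ Finset.range n,
          (inorm (gH (lo (i + 1), hi (i + 1)) (lo i, hi i))) ^ (l1 + l2) := by
  have hlo0 : ∀ i ≤ n, 0 ≤ lo i := by
    intro i hin
    induction i with
    | zero => rw [h0lo]
    | succ k ih =>
      have hk : k < n := Nat.lt_of_succ_le hin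
      exact le_trans (ih hk.le) (hlo k hk)
  have hhi0 : ∀ i ≤ n, 0 ≤ hi i := fun i hin => (hlo0 i hin).trans (hvalid i hin)
  set d : ℕ → ℝ := fun i => hi (i + 1) - hi i with hdd
  have hd : ∀ i < n, 0 ≤ d i := fun i hin => sub_nonneg.2 (hhi i hin)
  have hb : ∀ i ≤ n, hi i = ∑ j ∈ Finset.range i, d j := by
    intro i _
    have := Finset.sum_range_sub hi i
    simp only [hdd]
    rw [this, h0hi, sub_zero]
  -- rewrite each term of LHS
  have hL : ∀ i ∈ Finset.range n,
      inorm (imul (ipowI (lo i, hi i) l1)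
                  (ipowI (gH (lo (i + 1), hi (i + 1)) (lo i, hi i)) l2))
        = hi i ^ l1 * d i ^ l2 := by
    intro i hi'
    have hin : i < n := Finset.mem_range.mp hi'
    have hΔ : lo (i+1) - lo i ≤ hi (i+1) - hi i := by
      have := hlen i hin; linarith
    have hΔ0 : 0 ≤ lo (i+1) - lo i := sub_nonneg.2 (hlo i hin)
    have hΔ0' : 0 ≤ hi (i+1) - hi i := sub_nonneg.2 (hhi i hin)
    rw [gH_eq hΔ, ipowI_eq (hlo0 i hin.le) (hvalid i hin.le) l1, ipowI_eq hΔ0 hΔ l2,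
      imul_eq (pow_nonneg (hlo0 i hin.le) l1)
        (pow_le_pow_left₀ (hlo0 i hin.le) (hvalid i hin.le) l1)
        (pow_nonneg hΔ0 l2) (pow_le_pow_left₀ hΔ0 hΔ l2),
      inorm_eq (mul_nonneg (pow_nonneg (hlo0 i hin.le) l1) (pow_nonneg hΔ0 l2))
        (mul_le_mul (pow_le_pow_left₀ (hlo0 i hin.le) (hvalid i hin.le) l1)
          (pow_le_pow_left₀ hΔ0 hΔ l2) (pow_nonneg hΔ0 l2)
          (pow_nonneg (hhi0 i hin.le) l1))]
  have hR : ∀ i ∈ Finset.range n,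
      (inorm (gH (lo (i + 1), hi (i + 1)) (lo i, hi i))) ^ (l1 + l2) = d i ^ (l1 + l2) := by
    intro i hi'
    have hin : i < n := Finset.mem_range.mp hi'
    have hΔ : lo (i+1) - lo i ≤ hi (i+1) - hi i := by
      have := hlen i hin; linarith
    have hΔ0 : 0 ≤ lo (i+1) - lo i := sub_nonneg.2 (hlo i hin)
    rw [gH_eq hΔ, inorm_eq hΔ0 hΔ]
  rw [Finset.sum_congr rfl hL, Finset.sum_congr rfl hR]
  have hpq : (0:ℝ) < (l1:ℝ) + l2 := by
    have : (1:ℝ) ≤ (l1:ℝ) := by exact_mod_cast hl1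
    have : (1:ℝ) ≤ (l2:ℝ) := by exact_mod_cast hl2
    linarith
  rw [div_mul_eq_mul_div, le_div_iff₀ hpq]
  have key := scalar_opial n l1 l2 hl1 hl2 d hd
  calc (∑ i ∈ Finset.range n, hi i ^ l1 * d i ^ l2) * ((l1:ℝ) + l2)
      = ((l1:ℝ) + l2) * ∑ i ∈ Finset.range n,
          (∑ j ∈ Finset.range i, d j) ^ l1 * d i ^ l2 := by
        rw [mul_comm]
        congr 1
        exact Finset.sum_congr rfl fun i hi' =>
          by rw [hb i (Finset.mem_range.mp hi').le]
    _ ≤ ((l2:ℝ) * ((n:ℝ)+1) ^ l1) * ∑ i ∈ Finset.range n, d i ^ (l1 + l2) := key
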